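/- (Functoriality of derivative ideals and order under smooth extension by variables.) Let k be a field of characteristic zero, R = k[x_1,…,x_n], S = k[x_1,…,x_n, y_1,…,y_m], and let I ⊆ R be an ideal. Denote by D_S the derivative ideal operation on S using all n+m partial derivatives. Then D_S^a(I·S) = (D^a(I))·S for every natural number a. Consequently, if I is nonzero, then for every p ∈ k^n and q ∈ k^m one has ord_{(p,q)}(I·S) = ord_p(I). -/

import Mathlib

open MvPolynomial

/-- The derivative ideal: the ideal generated by `I` together with all first partial
derivatives of its elements (with respect to all variables). -/
noncomputable def derivIdeal {k : Type*} [CommSemiring k] {σ : Type*}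
    (I : Ideal (MvPolynomial σ k)) : Ideal (MvPolynomial σ k) :=
  I ⊔ Ideal.span {g | ∃ f ∈ I, ∃ i : σ, g = pderiv i f}

/-- The order of a nonzero polynomial at a point `p`: the smallest total degree of a monomial
appearing in the shifted polynomial `f(x+p)`. -/
noncomputable def polyOrdAt {k : Type*} [CommSemiring k] {σ : Type*} (p : σ → k)
    (f : MvPolynomial σ k) : ℕ :=
  sInf {m | ∃ d ∈ (aeval (fun i => X i + C (p i)) f : MvPolynomial σ k).support,
    (d.sum fun _ e => e) = m}

/-- The order of a nonzero ideal at a point: `min {ord_p f : 0 ≠ f ∈ I}`. -/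
noncomputable def idealOrdAt {k : Type*} [CommSemiring k] {σ : Type*} (p : σ → k)
    (I : Ideal (MvPolynomial σ k)) : ℕ :=
  sInf {m | ∃ f ∈ I, f ≠ 0 ∧ polyOrdAt p f = m}

section Aux1

variable {k : Type*} [CommSemiring k] {σ τ : Type*}

lemma pderiv_inr_rename_inl (f : MvPolynomial σ k) (j : τ) :
    pderiv (Sum.inr j) (rename (Sum.inl : σ → σ ⊕ τ) f) = 0 := by
  classical
  apply pderiv_eq_zero_of_notMem_vars
  intro h
  obtain ⟨i, _, hi⟩ := mem_vars_rename _ _ h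
  exact Sum.inl_ne_inr hi

lemma le_derivIdeal (K : Ideal (MvPolynomial σ k)) : K ≤ derivIdeal K := le_sup_left

lemma pderiv_mem_derivIdeal {K : Ideal (MvPolynomial σ k)} {f : MvPolynomial σ k}
    (hf : f ∈ K) (i : σ) : pderiv i f ∈ derivIdeal K :=
  le_sup_right (α := Ideal (MvPolynomial σ k)) (Ideal.subset_span ⟨f, hf, i, rfl⟩)

lemma pderiv_mem_of_mem_map (K : Ideal (MvPolynomial σ k)) {f : MvPolynomial (σ ⊕ τ) k}
    (hf : f ∈ Ideal.map (rename (Sum.inl : σ → σ ⊕ τ) :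
      MvPolynomial σ k →ₐ[k] MvPolynomial (σ ⊕ τ) k) K) (i : σ ⊕ τ) :
    pderiv i f ∈ Ideal.map (rename (Sum.inl : σ → σ ⊕ τ) :
      MvPolynomial σ k →ₐ[k] MvPolynomial (σ ⊕ τ) k) (derivIdeal K) := by
  set φ := (rename (Sum.inl : σ → σ ⊕ τ) : MvPolynomial σ k →ₐ[k] MvPolynomial (σ ⊕ τ) k)
  have key : ∀ g ∈ Ideal.map φ K,
      g ∈ Ideal.map φ (derivIdeal K) ∧ ∀ j : σ ⊕ τ, pderiv j g ∈ Ideal.map φ (derivIdeal K) := by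
    intro g hg
    refine Submodule.span_induction ?_ ?_ ?_ ?_ hg
    · rintro x ⟨f₀, hf₀, rfl⟩
      refine ⟨Ideal.mem_map_of_mem φ (le_derivIdeal K hf₀), fun j => ?_⟩
      cases j with
      | inl j =>
        rw [show φ f₀ = rename Sum.inl f₀ from rfl, pderiv_rename Sum.inl_injective]
        exact Ideal.mem_map_of_mem φ (pderiv_mem_derivIdeal hf₀ j)
      | inr j =>
        rw [show φ f₀ = rename Sum.inl f₀ from rfl, pderiv_inr_rename_inl]
        exact Ideal.zero_mem _
    · exact ⟨Ideal.zero_mem _, fun j => by simp⟩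
    · rintro x y hx hy ⟨hx1, hx2⟩ ⟨hy1, hy2⟩
      exact ⟨Ideal.add_mem _ hx1 hy1, fun j => by
        rw [map_add]; exact Ideal.add_mem _ (hx2 j) (hy2 j)⟩
    · rintro r x hx ⟨hx1, hx2⟩
      refine ⟨Ideal.mul_mem_left _ _ hx1, fun j => ?_⟩
      rw [smul_eq_mul, pderiv_mul]
      exact Ideal.add_mem _ (Ideal.mul_mem_left _ _ hx1) (Ideal.mul_mem_left _ _ (hx2 j))
  exact (key f hf).2 i

lemma derivIdeal_map_rename' (K : Ideal (MvPolynomial σ k)) :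
    derivIdeal (Ideal.map (rename (Sum.inl : σ → σ ⊕ τ) :
        MvPolynomial σ k →ₐ[k] MvPolynomial (σ ⊕ τ) k) K) =
      Ideal.map (rename (Sum.inl : σ → σ ⊕ τ) :
        MvPolynomial σ k →ₐ[k] MvPolynomial (σ ⊕ τ) k) (derivIdeal K) := by
  set φ := (rename (Sum.inl : σ → σ ⊕ τ) : MvPolynomial σ k →ₐ[k] MvPolynomial (σ ⊕ τ) k)
  apply le_antisymm
  · refine sup_le (Ideal.map_mono (le_derivIdeal K)) ?_
    rw [Ideal.span_le]
    rintro g ⟨f, hf, i, rfl⟩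
    exact pderiv_mem_of_mem_map K hf i
  · rw [derivIdeal, Ideal.map_sup, Ideal.map_span]
    refine sup_le le_sup_left ?_
    rw [Ideal.span_le]
    rintro g ⟨x, ⟨f, hf, i, rfl⟩, rfl⟩
    have : φ (pderiv i f) = pderiv (Sum.inl i) (φ f) :=
      (pderiv_rename Sum.inl_injective i f).symm
    rw [this]
    exact pderiv_mem_derivIdeal (Ideal.mem_map_of_mem φ hf) (Sum.inl i)

end Aux1

section Aux2

open Pointwise

variable {k : Type*} [CommRing k] {σ τ : Type*}

lemma sum_mapDomain_inl {σ τ : Type*} (e : σ →₀ ℕ) :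
    ((Finsupp.mapDomain (Sum.inl : σ → σ ⊕ τ) e).sum fun _ n => n) = e.sum fun _ n => n :=
  Finsupp.sum_mapDomain_index (fun _ => rfl) (fun _ _ _ => rfl)

/-- order at 0: minimal total degree of a monomial in the support. -/
noncomputable def ord0 (f : MvPolynomial σ k) : ℕ :=
  sInf {m | ∃ d ∈ f.support, (d.sum fun _ e => e) = m}

/-- shift automorphism as an AlgHom -/
noncomputable def shiftHom (p : σ → k) : MvPolynomial σ k →ₐ[k] MvPolynomial σ k :=
  aeval (fun i => X i + C (p i))

lemma polyOrdAt_eq_ord0 (p : σ → k) (f : MvPolynomial σ k) :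
    polyOrdAt p f = ord0 (shiftHom p f) := rfl

lemma shiftHom_comp_neg (p : σ → k) :
    (shiftHom p).comp (shiftHom (fun i => - p i)) = AlgHom.id k _ := by
  apply MvPolynomial.algHom_ext
  intro i
  simp [shiftHom]

lemma shiftHom_bijective (p : σ → k) : Function.Bijective (shiftHom p) := by
  have h1 := shiftHom_comp_neg p
  have h2 := shiftHom_comp_neg (fun i => - (p i))
  simp only [neg_neg] at h2
  constructor
  · intro a b hab
    have := congrArg (shiftHom fun i => - p i) hab
    calc a = (shiftHom (fun i => - p i)).comp (shiftHom p) a := by rw [h2]; rfl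
    _ = (shiftHom (fun i => - p i)).comp (shiftHom p) b := this
    _ = b := by rw [h2]; rfl
  · intro g
    exact ⟨shiftHom (fun i => - p i) g, DFunLike.congr_fun h1 g⟩

lemma shiftHom_rename (p : σ → k) (q : τ → k) (f : MvPolynomial σ k) :
    shiftHom (Sum.elim p q) (rename (Sum.inl : σ → σ ⊕ τ) f)
      = rename Sum.inl (shiftHom p f) := by
  have : ((shiftHom (Sum.elim p q)).comp
      (rename (Sum.inl : σ → σ ⊕ τ) : MvPolynomial σ k →ₐ[k] _))
      = ((rename (Sum.inl : σ → σ ⊕ τ) : MvPolynomial σ k →ₐ[k] _).comp (shiftHom p)) := by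
    apply MvPolynomial.algHom_ext
    intro i
    simp [shiftHom]
  exact DFunLike.congr_fun this f

lemma ord0_rename (f : MvPolynomial σ k) :
    ord0 (rename (Sum.inl : σ → σ ⊕ τ) f) = ord0 f := by
  classical
  unfold ord0
  congr 1
  ext m
  simp only [Set.mem_setOf_eq, support_rename_of_injective Sum.inl_injective, Finset.mem_image]
  constructor
  · rintro ⟨d, ⟨e, he, rfl⟩, hsum⟩
    exact ⟨e, he, by rw [← hsum, sum_mapDomain_inl]⟩
  · rintro ⟨e, he, hsum⟩
    exact ⟨Finsupp.mapDomain Sum.inl e, ⟨e, he, rfl⟩, by rw [← hsum, sum_mapDomain_inl]⟩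

/-- ideal of polynomials all of whose monomials have total degree ≥ c -/
noncomputable def degGE (σ : Type*) (k : Type*) [CommRing k] (c : ℕ) :
    Ideal (MvPolynomial σ k) where
  carrier := {h | ∀ d ∈ h.support, c ≤ d.sum fun _ e => e}
  add_mem' := by
    classical
    intro a b ha hb d hd
    rcases Finset.mem_union.1 (MvPolynomial.support_add hd) with h | h
    exacts [ha d h, hb d h]
  zero_mem' := by simp
  smul_mem' := by
    classical
    intro r h hh d hd
    have hd' : d ∈ r.support + h.support := MvPolynomial.support_mul r h (by simpa using hd)
    rw [Finset.mem_add] at hd'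
    obtain ⟨a, ha, b, hb, rfl⟩ := hd'
    calc c ≤ b.sum fun _ e => e := hh b hb
    _ ≤ (a + b).sum fun _ e => e := by
        rw [Finsupp.sum_add_index' (fun _ => rfl) (fun _ _ _ => rfl)]
        omega

lemma map_le_degGE (J : Ideal (MvPolynomial σ k)) :
    Ideal.map (rename (Sum.inl : σ → σ ⊕ τ) :
        MvPolynomial σ k →ₐ[k] MvPolynomial (σ ⊕ τ) k) J
      ≤ degGE (σ ⊕ τ) k (sInf {m | ∃ f ∈ J, f ≠ 0 ∧ ord0 f = m}) := by
  classical
  set c := sInf {m | ∃ f ∈ J, f ≠ 0 ∧ ord0 f = m}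
  rw [Ideal.map_le_iff_le_comap]
  intro f hf
  intro d hd
  rw [support_rename_of_injective Sum.inl_injective] at hd
  obtain ⟨e, he, rfl⟩ := Finset.mem_image.1 hd
  have hf0 : f ≠ 0 := by rintro rfl; simp at he
  have h1 : c ≤ ord0 f := Nat.sInf_le ⟨f, hf, hf0, rfl⟩
  have h2 : ord0 f ≤ e.sum fun _ e => e := Nat.sInf_le ⟨e, he, rfl⟩
  have h3 := sum_mapDomain_inl (τ := τ) e
  omega

end Aux2

/-- Functoriality of derivative ideals and of order under the smooth extension
`R = k[x₁,…,xₙ] ↪ S = k[x₁,…,xₙ,y₁,…,y_m]`: one has `D_Sᵃ(I·S) = (Dᵃ(I))·S` for all `a`, and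
consequently `ord_{(p,q)}(I·S) = ord_p(I)` for nonzero `I`. -/
theorem derivIdeal_iterate_map_rename {k : Type*} [Field k] [CharZero k] {n m : ℕ}
    (I : Ideal (MvPolynomial (Fin n) k)) :
    (∀ a : ℕ,
      derivIdeal^[a] (Ideal.map (rename (Sum.inl : Fin n → Fin n ⊕ Fin m) :
          MvPolynomial (Fin n) k →ₐ[k] MvPolynomial (Fin n ⊕ Fin m) k) I) =
        Ideal.map (rename (Sum.inl : Fin n → Fin n ⊕ Fin m) :
          MvPolynomial (Fin n) k →ₐ[k] MvPolynomial (Fin n ⊕ Fin m) k) (derivIdeal^[a] I)) ∧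
    (I ≠ ⊥ → ∀ (p : Fin n → k) (q : Fin m → k),
      idealOrdAt (Sum.elim p q)
        (Ideal.map (rename (Sum.inl : Fin n → Fin n ⊕ Fin m) :
          MvPolynomial (Fin n) k →ₐ[k] MvPolynomial (Fin n ⊕ Fin m) k) I) =
      idealOrdAt p I) := by
  set φ := (rename (Sum.inl : Fin n → Fin n ⊕ Fin m) :
    MvPolynomial (Fin n) k →ₐ[k] MvPolynomial (Fin n ⊕ Fin m) k)
  constructor
  · intro a
    induction a with
    | zero => rfl
    | succ a ih =>
      rw [Function.iterate_succ_apply', Function.iterate_succ_apply', ih,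
        derivIdeal_map_rename']
  · intro hI p q
    set B := {m' | ∃ f ∈ I, f ≠ 0 ∧ polyOrdAt p f = m'} with hBdef
    set A := {m' | ∃ g ∈ Ideal.map φ I, g ≠ 0 ∧ polyOrdAt (Sum.elim p q) g = m'} with hAdef
    have hφinj : Function.Injective φ := rename_injective _ Sum.inl_injective
    have hBne : B.Nonempty := by
      obtain ⟨f, hf, hf0⟩ := Submodule.exists_mem_ne_zero_of_ne_bot hI
      exact ⟨polyOrdAt p f, f, hf, hf0, rfl⟩
    have hBA : B ⊆ A := by
      rintro m' ⟨f, hf, hf0, rfl⟩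
      refine ⟨φ f, Ideal.mem_map_of_mem φ hf, fun h => hf0 (hφinj (by simpa using h)), ?_⟩
      rw [polyOrdAt_eq_ord0, polyOrdAt_eq_ord0, show φ f = rename Sum.inl f from rfl,
        shiftHom_rename, ord0_rename]
    show sInf A = sInf B
    apply le_antisymm
    · exact Nat.sInf_le (hBA (Nat.sInf_mem hBne))
    · have hAne : A.Nonempty := ⟨_, hBA (Nat.sInf_mem hBne)⟩
      obtain ⟨g, hg, hg0, hgord⟩ := Nat.sInf_mem hAne
      rw [← hgord]
      set T := shiftHom (k := k) p with hTdef
      set Tpq := shiftHom (k := k) (Sum.elim p q) with hTpqdef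
      set J := Ideal.map T I with hJdef
      have hBJ : B = {m' | ∃ f ∈ J, f ≠ 0 ∧ ord0 f = m'} := by
        ext m'
        constructor
        · rintro ⟨f, hf, hf0, rfl⟩
          exact ⟨T f, Ideal.mem_map_of_mem T hf,
            fun h => hf0 ((shiftHom_bijective p).1 (by simpa using h)),
            (polyOrdAt_eq_ord0 p f).symm⟩
        · rintro ⟨h, hh, hh0, rfl⟩
          obtain ⟨f, hf, rfl⟩ :=
            (Ideal.mem_map_iff_of_surjective T (shiftHom_bijective p).2).1 hh
          exact ⟨f, hf, fun h0 => hh0 (by rw [h0]; simp), polyOrdAt_eq_ord0 p f⟩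
      have hmem : Tpq g ∈ Ideal.map φ J := by
        have hle : Ideal.map φ I ≤ Ideal.comap Tpq (Ideal.map φ J) := by
          rw [Ideal.map_le_iff_le_comap]
          intro f hf
          show Tpq (φ f) ∈ Ideal.map φ J
          rw [show φ f = rename Sum.inl f from rfl, shiftHom_rename p q f]
          exact Ideal.mem_map_of_mem φ (Ideal.mem_map_of_mem T hf)
        exact hle hg
      have hTg0 : Tpq g ≠ 0 :=
        fun h => hg0 ((shiftHom_bijective _).1 (by simpa using h))
      rw [polyOrdAt_eq_ord0, hBJ]
      have hSne : {m' | ∃ d ∈ (Tpq g).support, (d.sum fun _ e => e) = m'}.Nonempty := by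
        obtain ⟨d, hd⟩ := Finset.nonempty_iff_ne_empty.2
          (fun h => hTg0 (MvPolynomial.support_eq_empty.1 h))
        exact ⟨d.sum fun _ e => e, d, hd, rfl⟩
      obtain ⟨d, hd, hds⟩ := Nat.sInf_mem hSne
      have hbound : sInf {m' | ∃ f ∈ J, f ≠ 0 ∧ ord0 f = m'} ≤ d.sum fun _ e => e :=
        map_le_degGE J hmem d hd
      rw [show ord0 (Tpq g) = sInf {m' | ∃ d ∈ (Tpq g).support,
        (d.sum fun _ e => e) = m'} from rfl, ← hds] at *
      exact hbound
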